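/- Assume e = 1 (the 2-adic case). Then for every 1 ≤ i ≤ n−1: α_i = 1 if R_{i+1} − R_i = 1, and α_i = (R_{i+1} − R_i)/2 + 1 otherwise. -/

import Mathlib

private lemma core18 (rz : ℤ) (s c x t : ℝ)
    (hc : c = 0 ∨ c = 1 ∨ c = 2)
    (hs : 0 ≤ s + c)
    (hc0 : c = 0 → 1 ≤ s)
    (hx : ((rz:ℝ) + c ≤ x ∧ s + c ≤ x) ∨ (c ≤ x ∧ (rz:ℝ) + s + c ≤ x))
    (hr2 : -2 ≤ rz)
    (hodd : Odd rz → 1 ≤ rz)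
    (ht : (rz = 1 ∧ t = 1) ∨ (rz ≠ 1 ∧ t = (rz:ℝ)/2 + 1)) : t ≤ x := by
  have hcn : 0 ≤ c := by rcases hc with h|h|h <;> norm_num [h]
  have hne : rz ≠ -1 := by
    intro hh
    have := hodd (by rw [hh]; exact ⟨-1, by ring⟩)
    omega
  have h5 : rz = -2 ∨ rz = 0 ∨ rz = 1 ∨ 2 ≤ rz := by omega
  rcases h5 with h | h | h | h
  · rcases ht with ⟨h1, _⟩ | ⟨_, ht⟩
    · omega
    have hr' : (rz:ℝ) = -2 := by exact_mod_cast congrArg (Int.cast : ℤ → ℝ) h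
    subst ht
    rcases hx with ⟨hx1, hx2⟩ | ⟨hx1, hx2⟩ <;> linarith
  · rcases ht with ⟨h1, _⟩ | ⟨_, ht⟩
    · omega
    have hr' : (rz:ℝ) = 0 := by exact_mod_cast congrArg (Int.cast : ℤ → ℝ) h
    subst ht
    rcases hc with hcv | hcv | hcv
    · have hs1 := hc0 hcv
      subst hcv
      rcases hx with ⟨hx1, hx2⟩ | ⟨hx1, hx2⟩ <;> linarith
    · subst hcv; rcases hx with ⟨hx1, hx2⟩ | ⟨hx1, hx2⟩ <;> linarith
    · subst hcv; rcases hx with ⟨hx1, hx2⟩ | ⟨hx1, hx2⟩ <;> linarith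
  · rcases ht with ⟨_, ht⟩ | ⟨h1, _⟩
    · have hr' : (rz:ℝ) = 1 := by exact_mod_cast congrArg (Int.cast : ℤ → ℝ) h
      subst ht
      rcases hx with ⟨hx1, hx2⟩ | ⟨hx1, hx2⟩ <;> linarith
    · omega
  · rcases ht with ⟨h1, _⟩ | ⟨_, ht⟩
    · omega
    have hr' : (2:ℝ) ≤ (rz:ℝ) := by exact_mod_cast h
    subst ht
    rcases hx with ⟨hx1, hx2⟩ | ⟨hx1, hx2⟩ <;> linarith


/-!
Combinatorial setting abstracting a good BONG over a dyadic local field.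
`R : ℕ → ℤ` are the orders `R_i = ord a_i` (indices `1,…,n` used),
`d : ℕ → EReal` are the values `d_j = d(-a_j a_{j+1}) ∈ ℕ ∪ {∞}`
(the allowed values are encoded in condition (G3) below).
-/

/-- The term `(R_{i+1} - R_i)/2 + e` appearing in the definition of `α_i`. -/
noncomputable def halfTerm (e : ℤ) (R : ℕ → ℤ) (i : ℕ) : EReal :=
  (((R (i + 1) - R i : ℝ) / 2 + (e : ℝ) : ℝ) : EReal)

/-- The set whose minimum defines `α_i`. -/
noncomputable def alphaSet (e : ℤ) (n : ℕ) (R : ℕ → ℤ) (d : ℕ → EReal) (i : ℕ) :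
    Set EReal :=
  {halfTerm e R i}
    ∪ {x | ∃ j, 1 ≤ j ∧ j ≤ i ∧ x = ((R (i + 1) - R j : ℝ) : EReal) + d j}
    ∪ {x | ∃ j, i ≤ j ∧ j + 1 ≤ n ∧ x = ((R (j + 1) - R i : ℝ) : EReal) + d j}

/-- The invariant `α_i = α_i(L)`, for `1 ≤ i ≤ n - 1`. -/
noncomputable def alpha (e : ℤ) (n : ℕ) (R : ℕ → ℤ) (d : ℕ → EReal) (i : ℕ) : EReal :=
  sInf (alphaSet e n R d i)

/-- `α'_m(k,l)`: the `α`-invariant of the truncated data `R_k,…,R_l`, `d_k,…,d_{l-1}`. -/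
noncomputable def alphaT (e : ℤ) (R : ℕ → ℤ) (d : ℕ → EReal) (k l m : ℕ) : EReal :=
  alpha e (l - k + 1) (fun j => R (k + j - 1)) (fun j => d (k + j - 1)) m

/-- Conditions (G1)-(G4) on the data `(e, n, R, d)`, abstracting a good BONG. -/
structure GoodBONG (e : ℤ) (n : ℕ) (R : ℕ → ℤ) (d : ℕ → EReal) : Prop where
  he : 1 ≤ e
  hn : 2 ≤ n
  g1 : ∀ i, 1 ≤ i → i + 2 ≤ n → R i ≤ R (i + 2)
  g2a : ∀ j, 1 ≤ j → j + 1 ≤ n → 0 ≤ R (j + 1) - R j + 2 * e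
  g2b : ∀ j, 1 ≤ j → j + 1 ≤ n → 0 ≤ ((R (j + 1) - R j : ℝ) : EReal) + d j
  g3 : ∀ j, 1 ≤ j → j + 1 ≤ n →
    d j = 0 ∨ (∃ m : ℕ, Odd m ∧ (m : ℤ) ≤ 2 * e - 1 ∧ d j = ((m : ℝ) : EReal)) ∨
      d j = (((2 * e : ℤ) : ℝ) : EReal) ∨ d j = ⊤
  g4odd : ∀ j, 1 ≤ j → j + 1 ≤ n → Odd (R (j + 1) - R j) →
    0 < R (j + 1) - R j ∧ d j = 0
  g4even : ∀ j, 1 ≤ j → j + 1 ≤ n → Even (R (j + 1) - R j) → 0 < d j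

/-- in the 2-adic case `e = 1`, one has `α_i = 1` if `R_{i+1} - R_i = 1`,
and `α_i = (R_{i+1} - R_i)/2 + 1` otherwise. -/
theorem stmt18 (e : ℤ) (n : ℕ) (R : ℕ → ℤ) (d : ℕ → EReal)
    (h : GoodBONG e n R d) (he1 : e = 1) (i : ℕ) (hi : 1 ≤ i) (hin : i + 1 ≤ n) :
    (R (i + 1) - R i = 1 → alpha e n R d i = 1) ∧
    (R (i + 1) - R i ≠ 1 →
      alpha e n R d i = (((R (i + 1) - R i : ℝ) / 2 + 1 : ℝ) : EReal)) := by
  subst he1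
  obtain ⟨he, hn, g1, g2a, g2b, g3, g4odd, g4even⟩ := h
  -- parity chain
  have chain : ∀ k a, 1 ≤ a → a + 2*k ≤ n → R a ≤ R (a + 2*k) := by
    intro k
    induction k with
    | zero => intro a _ _; simp
    | succ m ih =>
      intro a ha hb
      have h1 := ih a ha (by omega)
      have h2 := g1 (a + 2*m) (by omega) (by omega)
      have heq : a + 2*(m+1) = a + 2*m + 2 := by ring
      rw [heq]
      exact le_trans h1 h2
  have Rle : ∀ a b, 1 ≤ a → b ≤ n → a ≤ b → a % 2 = b % 2 → R a ≤ R b := by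
    intro a b ha hb hab hpar
    obtain ⟨k, hk⟩ : ∃ k, b = a + 2*k := ⟨(b - a)/2, by omega⟩
    subst hk
    exact chain _ a ha hb
  -- possible values of d j
  have hd4 : ∀ j, 1 ≤ j → j+1 ≤ n →
      d j = ((0:ℝ):EReal) ∨ d j = ((1:ℝ):EReal) ∨ d j = ((2:ℝ):EReal) ∨ d j = ⊤ := by
    intro j h1 h2
    rcases g3 j h1 h2 with hh | ⟨m, hm, hm1, hh⟩ | hh | hh
    · exact Or.inl (by rw [hh]; norm_num)
    · refine Or.inr (Or.inl ?_)
      have hm' : m = 1 := by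
        rcases hm with ⟨k, hk⟩
        omega
      rw [hh, hm']; norm_num
    · exact Or.inr (Or.inr (Or.inl (by rw [hh]; norm_num)))
    · exact Or.inr (Or.inr (Or.inr hh))
  -- c = 0 implies 1 ≤ R (j+1) - R j
  have hzero : ∀ j, 1 ≤ j → j+1 ≤ n → d j = ((0:ℝ):EReal) → (1:ℝ) ≤ (R (j+1):ℝ) - R j := by
    intro j h1 h2 hd0
    have hd0' : d j = 0 := by rw [hd0]; norm_num
    have hne : ¬ Even (R (j+1) - R j) := by
      intro hev
      have := g4even j h1 h2 hev
      rw [hd0'] at this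
      exact lt_irrefl _ this
    have hoj := (g4odd j h1 h2 (Int.not_even_iff_odd.mp hne)).1
    have : (1:ℤ) ≤ R (j+1) - R j := hoj
    exact_mod_cast this
  have hAB : -2 ≤ R (i+1) - R i := by have := g2a i hi hin; omega
  have hoddi : Odd (R (i+1) - R i) → 1 ≤ R (i+1) - R i := fun ho => (g4odd i hi hin ho).1
  -- lower bound
  have key : ∀ (t : ℝ),
      ((R (i+1) - R i = 1 ∧ t = 1) ∨ (R (i+1) - R i ≠ 1 ∧ t = ((R (i+1) - R i : ℤ):ℝ)/2 + 1)) →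
      ∀ x ∈ alphaSet 1 n R d i, (t : EReal) ≤ x := by
    intro t ht x hx
    simp only [alphaSet, Set.mem_union, Set.mem_singleton_iff, Set.mem_setOf_eq] at hx
    rcases hx with (hx | ⟨j, hj1, hji, hx⟩) | ⟨j, hij, hjn, hx⟩
    · -- halfTerm
      subst hx
      unfold halfTerm
      rw [EReal.coe_le_coe_iff]
      rcases ht with ⟨h1, ht⟩ | ⟨_, ht⟩
      · have h1' : (R (i+1):ℝ) - R i = 1 := by exact_mod_cast h1
        subst ht; push_cast; linarith
      · subst ht; push_cast; linarith
    · -- left terms, 1 ≤ j ≤ i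
      have hjn' : j + 1 ≤ n := by omega
      have hpar : (R j ≤ R i ∧ R (j+1) ≤ R (i+1)) ∨ (R j ≤ R (i+1) ∧ R (j+1) ≤ R i) := by
        rcases Nat.even_or_odd (i - j) with hp | hp
        · rw [Nat.even_iff] at hp
          exact Or.inl ⟨Rle j i hj1 (by omega) hji (by omega),
            Rle (j+1) (i+1) (by omega) (by omega) (by omega) (by omega)⟩
        · rw [Nat.odd_iff] at hp
          exact Or.inr ⟨Rle j (i+1) hj1 (by omega) (by omega) (by omega),
            Rle (j+1) i (by omega) (by omega) (by omega) (by omega)⟩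
      subst hx
      have finCase : ∀ c : ℝ, (c = 0 ∨ c = 1 ∨ c = 2) → d j = ((c:ℝ):EReal) →
          (t : EReal) ≤ ((R (i + 1) - R j : ℝ) : EReal) + d j := by
        intro c hc hdc
        rw [hdc, ← EReal.coe_add, EReal.coe_le_coe_iff]
        have hs : (0:ℝ) ≤ ((R (j+1):ℝ) - R j) + c := by
          have := g2b j hj1 hjn'
          rw [hdc, ← EReal.coe_add] at this
          have h' : (0:ℝ) ≤ (R (j + 1) - R j : ℝ) + c := by exact_mod_cast this
          push_cast at h' ⊢
          linarith
        refine core18 (R (i+1) - R i) ((R (j+1):ℝ) - R j) c _ t hc hs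
          (fun hc0 => hzero j hj1 hjn' (by rw [hdc, hc0])) ?_ hAB hoddi ht
        rcases hpar with ⟨ha, hb⟩ | ⟨ha, hb⟩
        · have ha' : (R j:ℝ) ≤ R i := by exact_mod_cast ha
          have hb' : (R (j+1):ℝ) ≤ R (i+1) := by exact_mod_cast hb
          left
          constructor <;> push_cast <;> linarith
        · have ha' : (R j:ℝ) ≤ R (i+1) := by exact_mod_cast ha
          have hb' : (R (j+1):ℝ) ≤ R i := by exact_mod_cast hb
          right
          constructor <;> push_cast <;> linarith
      rcases hd4 j hj1 hjn' with hdv | hdv | hdv | hdv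
      · exact finCase 0 (Or.inl rfl) hdv
      · exact finCase 1 (Or.inr (Or.inl rfl)) hdv
      · exact finCase 2 (Or.inr (Or.inr rfl)) hdv
      · rw [hdv, EReal.coe_add_top _]
        exact le_top
    · -- right terms, i ≤ j, j+1 ≤ n
      have hj1 : 1 ≤ j := by omega
      have hpar : (R i ≤ R j ∧ R (i+1) ≤ R (j+1)) ∨ (R (i+1) ≤ R j ∧ R i ≤ R (j+1)) := by
        rcases Nat.even_or_odd (j - i) with hp | hp
        · rw [Nat.even_iff] at hp
          exact Or.inl ⟨Rle i j hi (by omega) hij (by omega),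
            Rle (i+1) (j+1) (by omega) (by omega) (by omega) (by omega)⟩
        · rw [Nat.odd_iff] at hp
          exact Or.inr ⟨Rle (i+1) j (by omega) (by omega) (by omega) (by omega),
            Rle i (j+1) hi (by omega) (by omega) (by omega)⟩
      subst hx
      have finCase : ∀ c : ℝ, (c = 0 ∨ c = 1 ∨ c = 2) → d j = ((c:ℝ):EReal) →
          (t : EReal) ≤ ((R (j + 1) - R i : ℝ) : EReal) + d j := by
        intro c hc hdc
        rw [hdc, ← EReal.coe_add, EReal.coe_le_coe_iff]
        have hs : (0:ℝ) ≤ ((R (j+1):ℝ) - R j) + c := by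
          have := g2b j hj1 hjn
          rw [hdc, ← EReal.coe_add] at this
          have h' : (0:ℝ) ≤ (R (j + 1) - R j : ℝ) + c := by exact_mod_cast this
          push_cast at h' ⊢
          linarith
        refine core18 (R (i+1) - R i) ((R (j+1):ℝ) - R j) c _ t hc hs
          (fun hc0 => hzero j hj1 hjn (by rw [hdc, hc0])) ?_ hAB hoddi ht
        rcases hpar with ⟨ha, hb⟩ | ⟨ha, hb⟩
        · have ha' : (R i:ℝ) ≤ R j := by exact_mod_cast ha
          have hb' : (R (i+1):ℝ) ≤ R (j+1) := by exact_mod_cast hb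
          left
          constructor <;> push_cast <;> linarith
        · have ha' : (R (i+1):ℝ) ≤ R j := by exact_mod_cast ha
          have hb' : (R i:ℝ) ≤ R (j+1) := by exact_mod_cast hb
          right
          constructor <;> push_cast <;> linarith
      rcases hd4 j hj1 hjn with hdv | hdv | hdv | hdv
      · exact finCase 0 (Or.inl rfl) hdv
      · exact finCase 1 (Or.inr (Or.inl rfl)) hdv
      · exact finCase 2 (Or.inr (Or.inr rfl)) hdv
      · rw [hdv, EReal.coe_add_top _]
        exact le_top
  constructor
  · intro hr1
    have hd0 : d i = 0 := (g4odd i hi hin (by rw [hr1]; exact odd_one)).2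
    apply le_antisymm
    · have hmem : (1 : EReal) ∈ alphaSet 1 n R d i := by
        simp only [alphaSet, Set.mem_union, Set.mem_singleton_iff, Set.mem_setOf_eq]
        right
        refine ⟨i, le_refl i, hin, ?_⟩
        have h1' : (R (i + 1) - R i : ℝ) = 1 := by exact_mod_cast hr1
        rw [h1', hd0]
        norm_num
      exact sInf_le hmem
    · rw [show (1:EReal) = ((1:ℝ):EReal) by norm_num]
      exact le_sInf (fun b hb => key 1 (Or.inl ⟨hr1, rfl⟩) b hb)
  · intro hne
    apply le_antisymm
    · have hmem : halfTerm 1 R i ∈ alphaSet 1 n R d i := Or.inl (Or.inl rfl)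
      have heq : halfTerm 1 R i = (((R (i + 1) - R i : ℝ) / 2 + 1 : ℝ) : EReal) := by
        unfold halfTerm
        norm_num
      rw [← heq]
      exact sInf_le hmem
    · refine le_sInf (fun b hb => key ((R (i + 1) - R i : ℝ)/2 + 1) (Or.inr ⟨hne, ?_⟩) b hb)
      push_cast
      ring
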